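/- Let H ∈ (1/2, 1), let n ≥ 2, and let (Γ_n^k)_{k=2,…,n} be real numbers satisfying the one-sided projection system ρ_{l−1} = Σ_{k=2}^n Γ_n^k · ρ_{|l−k|} for all 2 ≤ l ≤ n, where ρ_k = ρ_k(H). If Γ_n^k > 0 for all 2 ≤ k ≤ n, then ρ_n − Σ_{k=2}^n Γ_n^k · ρ_{n+1−k} > 0; consequently, the coefficient Γ_{n+1}^{n+1} = (ρ_n − Σ_{k=2}^n Γ_n^k ρ_{n+1−k})/(1 − Σ_{k=2}^n Γ_n^k ρ_{k−1}) is strictly positive whenever its denominator is strictly positive. -/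

import Mathlib

open Real Set Finset

/-- Autocovariance function of fractional Gaussian noise with Hurst parameter `H`:
`ρ_k(H) = ((k+1)^{2H} − 2·k^{2H} + (k−1)^{2H})/2` for `k ≥ 1`, and `ρ_0(H) = 1`. -/
noncomputable def rho (H : ℝ) (k : ℕ) : ℝ :=
  if k = 0 then 1
  else (((k : ℝ) + 1) ^ (2 * H) - 2 * (k : ℝ) ^ (2 * H) + ((k : ℝ) - 1) ^ (2 * H)) / 2
lemma rho_pos (H : ℝ) (hH : H ∈ Ioo (1 / 2 : ℝ) 1) (k : ℕ) : 0 < rho H k := by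
  rcases Nat.eq_zero_or_pos k with h0 | h1
  · simp [rho, h0]
  · have hk : k ≠ 0 := h1.ne'
    rw [rho, if_neg hk]
    have hp : (1:ℝ) < 2 * H := by linarith [hH.1]
    have h1k : (1:ℝ) ≤ (k:ℝ) := by exact_mod_cast h1
    have hx : ((k:ℝ) - 1) ∈ Set.Ici (0:ℝ) := by simp only [Set.mem_Ici]; linarith
    have hy : ((k:ℝ) + 1) ∈ Set.Ici (0:ℝ) := by simp only [Set.mem_Ici]; linarith
    have hne : ((k:ℝ) - 1) ≠ ((k:ℝ) + 1) := by linarith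
    have hconv := (strictConvexOn_rpow hp).2 hx hy hne (by norm_num : (0:ℝ) < 1/2)
      (by norm_num : (0:ℝ) < 1/2) (by norm_num : (1:ℝ)/2 + 1/2 = 1)
    simp only [smul_eq_mul] at hconv
    have heq : (1/2 * ((k:ℝ) - 1) + 1/2 * ((k:ℝ) + 1)) = (k:ℝ) := by ring
    rw [heq] at hconv
    linarith

lemma sixteen_lt (H : ℝ) (hH : H ∈ Ioo (1 / 2 : ℝ) 1) :
    (16:ℝ) ^ H + 2 < 2 * (9:ℝ) ^ H := by
  set α : ℝ := Real.log 16 / Real.log 9 with hα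
  have hlog9 : 0 < Real.log 9 := Real.log_pos (by norm_num)
  have hα1 : 1 < α := by
    rw [hα, lt_div_iff₀ hlog9, one_mul]
    exact Real.log_lt_log (by norm_num) (by norm_num)
  set y : ℝ := (9:ℝ) ^ H with hy
  have hy3 : 3 < y := by
    have h12 : (9:ℝ) ^ ((1:ℝ)/2) < 9 ^ H := by
      exact Real.rpow_lt_rpow_left_iff (by norm_num : (1:ℝ) < 9) |>.2 hH.1
    have h9half : (9:ℝ) ^ ((1:ℝ)/2) = 3 := by
      rw [show (9:ℝ) = (3:ℝ) ^ (2:ℕ) by norm_num, ← Real.rpow_natCast 3 2,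
        ← Real.rpow_mul (by norm_num)]
      norm_num
    linarith [h9half ▸ h12]
  have hy9 : y < 9 := by
    have := Real.rpow_lt_rpow_left_iff (by norm_num : (1:ℝ) < 9) |>.2 hH.2
    simpa using this
  -- values of x ↦ x^α at 3 and 9
  have h3a : (3:ℝ) ^ α = 4 := by
    rw [Real.rpow_def_of_pos (by norm_num : (0:ℝ) < 3)]
    have l9 : Real.log 9 = 2 * Real.log 3 := by
      rw [show (9:ℝ) = 3 ^ (2:ℕ) by norm_num, Real.log_pow]; push_cast; ring
    have l16 : Real.log 16 = 2 * Real.log 4 := by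
      rw [show (16:ℝ) = 4 ^ (2:ℕ) by norm_num, Real.log_pow]; push_cast; ring
    have hlog3 : Real.log 3 ≠ 0 := by
      have := Real.log_pos (by norm_num : (1:ℝ) < 3); linarith
    rw [hα, l9, l16]
    rw [show Real.log 3 * (2 * Real.log 4 / (2 * Real.log 3)) = Real.log 4 by
      field_simp]
    exact Real.exp_log (by norm_num)
  have h9a : (9:ℝ) ^ α = 16 := by
    rw [Real.rpow_def_of_pos (by norm_num : (0:ℝ) < 9), hα]
    rw [show Real.log 9 * (Real.log 16 / Real.log 9) = Real.log 16 by
      field_simp]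
    exact Real.exp_log (by norm_num)
  have hya : y ^ α = (16:ℝ) ^ H := by
    rw [hy, ← Real.rpow_mul (by norm_num : (0:ℝ) ≤ 9), mul_comm,
      Real.rpow_mul (by norm_num : (0:ℝ) ≤ 9), h9a]
  have ha' : 0 < (9 - y)/6 := by linarith
  have hb' : 0 < (y - 3)/6 := by linarith
  have hconv := (strictConvexOn_rpow hα1).2 (x := 3) (y := 9)
    (by norm_num) (by norm_num) (by norm_num) ha' hb' (by ring)
  simp only [smul_eq_mul] at hconv
  rw [show (9 - y)/6 * 3 + (y - 3)/6 * 9 = y by ring] at hconv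
  rw [h3a, h9a, hya] at hconv
  nlinarith [hconv]

lemma rho_one_sq_lt (H : ℝ) (hH : H ∈ Ioo (1 / 2 : ℝ) 1) :
    rho H 1 ^ 2 < rho H 2 := by
  have h2H : 2 * H ≠ 0 := by nlinarith [hH.1]
  have e1 : rho H 1 = ((2:ℝ) ^ (2*H) - 2) / 2 := by
    simp [rho, Real.zero_rpow h2H, Real.one_rpow]
    norm_num
  have e2 : rho H 2 = ((3:ℝ) ^ (2*H) - 2 * (2:ℝ) ^ (2*H) + 1) / 2 := by
    simp [rho]
    norm_num
  have ha2 : ((2:ℝ) ^ (2*H)) ^ 2 = (16:ℝ) ^ H := by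
    rw [← Real.rpow_natCast ((2:ℝ) ^ (2*H)) 2, ← Real.rpow_mul (by norm_num : (0:ℝ) ≤ 2)]
    rw [show 2 * H * ((2:ℕ):ℝ) = (4:ℝ) * H by push_cast; ring]
    rw [Real.rpow_mul (by norm_num : (0:ℝ) ≤ 2)]
    rw [show ((2:ℝ) ^ (4:ℝ)) = 16 by
      rw [show (4:ℝ) = ((4:ℕ):ℝ) by norm_num, Real.rpow_natCast]; norm_num]
  have hb : (3:ℝ) ^ (2*H) = (9:ℝ) ^ H := by
    rw [show (2:ℝ) * H = (2:ℝ) * H from rfl, Real.rpow_mul (by norm_num : (0:ℝ) ≤ 3)]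
    rw [show ((3:ℝ) ^ (2:ℝ)) = 9 by
      rw [show (2:ℝ) = ((2:ℕ):ℝ) by norm_num, Real.rpow_natCast]; norm_num]
  have key := sixteen_lt H hH
  rw [e1, e2, hb]
  nlinarith [ha2, key, hb]

lemma shift_integrable (x s : ℝ) (hs : (-1:ℝ) < s) :
    IntervalIntegrable (fun v => (x + v) ^ s) MeasureTheory.volume 0 1 := by
  have h := (intervalIntegral.intervalIntegrable_rpow' hs (a := x) (b := x + 1)).comp_add_left x
  simpa using h

lemma shift_integral (x s : ℝ) (hs : (-1:ℝ) < s) :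
    ∫ v in (0:ℝ)..1, (x + v) ^ s = ((x + 1) ^ (s + 1) - x ^ (s + 1)) / (s + 1) := by
  rw [intervalIntegral.integral_comp_add_left (fun t => t ^ s) x,
    integral_rpow (Or.inl hs)]
  norm_num

lemma ae_Ioc_of_Ioc {P : ℝ → Prop} (h : ∀ u ∈ Set.Ioc (0:ℝ) 1, P u) :
    ∀ᵐ u ∂(MeasureTheory.volume.restrict (Set.Icc (0:ℝ) 1)), P u := by
  have h0 : ∀ᵐ (u : ℝ) ∂MeasureTheory.volume, u ≠ 0 := by
    rw [MeasureTheory.ae_iff]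
    simp only [not_not, Set.setOf_eq_eq_singleton]
    exact Real.volume_singleton
  filter_upwards [MeasureTheory.ae_restrict_mem measurableSet_Icc,
    MeasureTheory.ae_restrict_of_ae h0] with u hu hu0
  exact h u ⟨lt_of_le_of_ne hu.1 (Ne.symm hu0), hu.2⟩

lemma gcs {f g h : ℝ → ℝ}
    (hfi : IntervalIntegrable f MeasureTheory.volume 0 1)
    (hgi : IntervalIntegrable g MeasureTheory.volume 0 1)
    (hhi : IntervalIntegrable h MeasureTheory.volume 0 1)
    (hpt : ∀ u ∈ Set.Ioc (0:ℝ) 1, 0 ≤ f u ∧ 0 ≤ g u ∧ 0 ≤ h u ∧ g u ^ 2 ≤ f u * h u)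
    (hF : 0 < ∫ u in (0:ℝ)..1, f u) (hK : 0 < ∫ u in (0:ℝ)..1, h u) :
    (∫ u in (0:ℝ)..1, g u) ^ 2 ≤ (∫ u in (0:ℝ)..1, f u) * (∫ u in (0:ℝ)..1, h u) := by
  set F := ∫ u in (0:ℝ)..1, f u with hFdef
  set G := ∫ u in (0:ℝ)..1, g u with hGdef
  set K := ∫ u in (0:ℝ)..1, h u with hKdef
  have hG0 : 0 ≤ G := by
    have := intervalIntegral.integral_mono_ae_restrict (by norm_num : (0:ℝ) ≤ 1)
      (intervalIntegrable_const (c := (0:ℝ))) hgi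
      (ae_Ioc_of_Ioc (P := fun u => (0:ℝ) ≤ g u) (fun u hu => (hpt u hu).2.1))
    simpa using this
  have key : ∀ t : ℝ, 0 < t → 2 * t * G ≤ t ^ 2 * F + K := by
    intro t ht
    have hmono := intervalIntegral.integral_mono_ae_restrict (by norm_num : (0:ℝ) ≤ 1)
      (hgi.const_mul (2 * t)) ((hfi.const_mul (t ^ 2)).add hhi)
      (ae_Ioc_of_Ioc (P := fun u => 2 * t * g u ≤ t ^ 2 * f u + h u) ?_)
    · rw [intervalIntegral.integral_const_mul, intervalIntegral.integral_add
        (hfi.const_mul (t ^ 2)) hhi, intervalIntegral.integral_const_mul] at hmono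
      exact hmono
    · intro u hu
      obtain ⟨hf0, hg0, hh0, hsq⟩ := hpt u hu
      rcases eq_or_lt_of_le hf0 with hf' | hf'
      · have hg' : g u = 0 := by nlinarith
        rw [hg']; nlinarith
      · nlinarith [sq_nonneg (t * f u - g u), hsq, mul_pos ht ht]
  set t := Real.sqrt (K / F) with htdef
  have ht : 0 < t := Real.sqrt_pos.2 (div_pos hK hF)
  have ht2 : t ^ 2 = K / F := Real.sq_sqrt (le_of_lt (div_pos hK hF))
  have hkey := key t ht
  rw [ht2] at hkey
  have hcan : K / F * F = K := div_mul_cancel₀ _ (ne_of_gt hF)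
  have h2 : t * G ≤ K := by nlinarith
  have hsq2 : t ^ 2 * G ^ 2 ≤ K ^ 2 := by nlinarith [mul_nonneg (le_of_lt ht) hG0]
  rw [ht2] at hsq2
  have h3 : K * G ^ 2 ≤ K ^ 2 * F := by
    have : K / F * G ^ 2 * F ≤ K ^ 2 * F := by nlinarith
    calc K * G ^ 2 = K / F * G ^ 2 * F := by field_simp
      _ ≤ K ^ 2 * F := this
  nlinarith

noncomputable def Jc (q x : ℝ) : ℝ := ((x + 1) ^ q - x ^ q) / q

lemma Jc_pos {q : ℝ} (hq : 0 < q) {x : ℝ} (hx : 0 ≤ x) : 0 < Jc q x := by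
  have := Real.rpow_lt_rpow hx (by linarith : x < x + 1) hq
  unfold Jc
  exact div_pos (by linarith) hq

lemma Jc_cont {q : ℝ} (hq : 0 < q) (x : ℝ) :
    Continuous (fun u : ℝ => Jc q (x + u)) := by
  unfold Jc
  apply Continuous.div_const
  apply Continuous.sub
  · exact (Real.continuous_rpow_const hq.le).comp (by continuity)
  · exact (Real.continuous_rpow_const hq.le).comp (by continuity)

lemma Jc_rep {q : ℝ} (hq0 : 0 < q) (y : ℝ) :
    Jc q y = ∫ v in (0:ℝ)..1, (y + v) ^ (q - 1) := by
  rw [shift_integral y (q - 1) (by linarith), show q - 1 + 1 = q by ring]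
  rfl

lemma Jc_sq {q : ℝ} (hq0 : 0 < q) (hq1 : q < 1) {x : ℝ} (hx : 0 ≤ x) :
    Jc q (x + 1) ^ 2 ≤ Jc q x * Jc q (x + 2) := by
  rw [Jc_rep hq0, Jc_rep hq0, Jc_rep hq0]
  apply gcs (shift_integrable x (q-1) (by linarith))
    (shift_integrable (x+1) (q-1) (by linarith))
    (shift_integrable (x+2) (q-1) (by linarith))
  · intro u hu
    have hxu : 0 < x + u := by linarith [hu.1]
    refine ⟨Real.rpow_nonneg (by linarith) _, Real.rpow_nonneg (by linarith) _,
      Real.rpow_nonneg (by linarith) _, ?_⟩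
    have hmul : ((x + 1 + u) ^ (q-1)) ^ 2 = ((x + 1 + u) * (x + 1 + u)) ^ (q-1) := by
      rw [sq, ← Real.mul_rpow (by linarith) (by linarith)]
    rw [hmul, ← Real.mul_rpow (by linarith) (by linarith)]
    apply Real.rpow_le_rpow_of_nonpos
    · nlinarith
    · nlinarith
    · linarith
  · rw [← Jc_rep hq0]; exact Jc_pos hq0 hx
  · rw [← Jc_rep hq0]; exact Jc_pos hq0 (by linarith)

lemma Jc_integral {q : ℝ} (hq0 : 0 < q) (x : ℝ) :
    ∫ u in (0:ℝ)..1, Jc q (x + u)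
      = ((x + 2) ^ (q+1) - 2 * (x + 1) ^ (q+1) + x ^ (q+1)) / (q * (q+1)) := by
  have h1 : IntervalIntegrable (fun u => (x + 1 + u) ^ q) MeasureTheory.volume 0 1 :=
    shift_integrable (x+1) q (by linarith)
  have h2 : IntervalIntegrable (fun u => (x + u) ^ q) MeasureTheory.volume 0 1 :=
    shift_integrable x q (by linarith)
  have heq : (fun u : ℝ => Jc q (x + u)) = fun u => ((x + 1 + u) ^ q - (x + u) ^ q) / q := by
    funext u; unfold Jc; rw [show x + u + 1 = x + 1 + u by ring]
  rw [heq, intervalIntegral.integral_div, intervalIntegral.integral_sub h1 h2,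
    shift_integral (x+1) q (by linarith), shift_integral x q (by linarith),
    show x + 1 + 1 = x + 2 by ring]
  have hq1 : q + 1 ≠ 0 := by linarith
  field_simp
  ring

lemma rho_rep (H : ℝ) (hH : H ∈ Ioo (1 / 2 : ℝ) 1) (k : ℕ) (hk : 1 ≤ k) :
    rho H k = (H * (2*H - 1)) * ∫ u in (0:ℝ)..1, Jc (2*H - 1) ((k:ℝ) - 1 + u) := by
  have hq0 : 0 < 2*H - 1 := by linarith [hH.1]
  rw [Jc_integral hq0]
  rw [rho, if_neg (by omega)]
  rw [show (k:ℝ) - 1 + 2 = (k:ℝ) + 1 by ring, show (k:ℝ) - 1 + 1 = (k:ℝ) by ring,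
    show 2*H - 1 + 1 = 2*H by ring]
  have h2H : (2*H) ≠ 0 := by linarith [hH.1]
  have hH0 : H ≠ 0 := by linarith [hH.1]
  field_simp

lemma rho_rep' (H : ℝ) (hH : H ∈ Ioo (1 / 2 : ℝ) 1) (k : ℕ) (hk : 1 ≤ k) (x : ℝ)
    (hx : x = (k:ℝ) - 1) :
    rho H k = (H * (2*H - 1)) * ∫ u in (0:ℝ)..1, Jc (2*H - 1) (x + u) := by
  subst hx; exact rho_rep H hH k hk

lemma rho_logconvex (H : ℝ) (hH : H ∈ Ioo (1 / 2 : ℝ) 1) (k : ℕ) (hk : 1 ≤ k) :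
    rho H (k+1) ^ 2 ≤ rho H k * rho H (k+2) := by
  have hq0 : 0 < 2*H - 1 := by linarith [hH.1]
  have hq1 : 2*H - 1 < 1 := by linarith [hH.2]
  have hc : 0 < H * (2*H - 1) := by nlinarith [hH.1]
  have hk1 : (1:ℝ) ≤ (k:ℝ) := by exact_mod_cast hk
  set q := 2*H - 1 with hqdef
  set I0 := ∫ u in (0:ℝ)..1, Jc q ((k:ℝ) - 1 + u) with hI0
  set I1 := ∫ u in (0:ℝ)..1, Jc q ((k:ℝ) + u) with hI1
  set I2 := ∫ u in (0:ℝ)..1, Jc q ((k:ℝ) + 1 + u) with hI2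
  have r0 : rho H k = (H * q) * I0 := rho_rep' H hH k hk _ rfl
  have r1 : rho H (k+1) = (H * q) * I1 := rho_rep' H hH (k+1) (by omega) _ (by push_cast; ring)
  have r2 : rho H (k+2) = (H * q) * I2 := rho_rep' H hH (k+2) (by omega) _ (by push_cast; ring)
  have hI0pos : 0 < I0 := by
    have h1 := rho_pos H hH k
    rw [r0] at h1
    have h2 : 0 < (H * q)⁻¹ * ((H * q) * I0) := mul_pos (inv_pos.2 hc) h1
    rwa [inv_mul_cancel_left₀ hc.ne'] at h2
  have hI2pos : 0 < I2 := by
    have h1 := rho_pos H hH (k+2)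
    rw [r2] at h1
    have h2 : 0 < (H * q)⁻¹ * ((H * q) * I2) := mul_pos (inv_pos.2 hc) h1
    rwa [inv_mul_cancel_left₀ hc.ne'] at h2
  have hgcs : I1 ^ 2 ≤ I0 * I2 := by
    rw [hI0, hI1, hI2]
    apply gcs ((Jc_cont hq0 ((k:ℝ) - 1)).intervalIntegrable 0 1)
      ((Jc_cont hq0 ((k:ℝ))).intervalIntegrable 0 1)
      ((Jc_cont hq0 ((k:ℝ) + 1)).intervalIntegrable 0 1)
      ?_ (hI0 ▸ hI0pos) (hI2 ▸ hI2pos)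
    intro u hu
    have hx : 0 ≤ (k:ℝ) - 1 + u := by linarith [hu.1.le]
    refine ⟨(Jc_pos hq0 hx).le, (Jc_pos hq0 (by linarith : (0:ℝ) ≤ (k:ℝ) + u)).le,
      (Jc_pos hq0 (by linarith : (0:ℝ) ≤ (k:ℝ) + 1 + u)).le, ?_⟩
    have hsq := Jc_sq hq0 hq1 hx
    rw [show (k:ℝ) - 1 + u + 1 = (k:ℝ) + u by ring,
      show (k:ℝ) - 1 + u + 2 = (k:ℝ) + 1 + u by ring] at hsq
    exact hsq
  rw [r0, r1, r2]
  calc (H * q * I1) ^ 2 = (H * q) ^ 2 * I1 ^ 2 := by ring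
    _ ≤ (H * q) ^ 2 * (I0 * I2) := mul_le_mul_of_nonneg_left hgcs (by positivity)
    _ = (H * q * I0) * (H * q * I2) := by ring

lemma chain (H : ℝ) (hH : H ∈ Ioo (1 / 2 : ℝ) 1) :
    ∀ m : ℕ, 1 ≤ m →
    (rho H 1 * rho H m < rho H (m+1)) ∧
    (∀ j, 1 ≤ j → j ≤ m → rho H (j+1) * rho H m ≤ rho H j * rho H (m+1)) := by
  intro m
  induction m with
  | zero => omega
  | succ m ih =>
    intro _
    by_cases h0 : m = 0
    · subst h0
      constructor
      · have h := rho_one_sq_lt H hH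
        show rho H 1 * rho H 1 < rho H 2
        nlinarith [h]
      · intro j hj1 hj2
        have hj : j = 1 := by omega
        subst hj
        exact le_of_eq (mul_comm _ _)
    · have hm' : 1 ≤ m := by omega
      obtain ⟨ihA, ihB⟩ := ih hm'
      have LC := rho_logconvex H hH m hm'
      have p_m := rho_pos H hH m
      have p_m1 := rho_pos H hH (m+1)
      have p_m2 := rho_pos H hH (m+2)
      have p_1 := rho_pos H hH 1
      rw [show m + 2 = m + 1 + 1 by omega] at LC p_m2
      constructor
      · nlinarith [ihA, LC, p_m, p_m1, p_m2, p_1]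
      · intro j hj1 hj2
        rcases Nat.lt_or_ge j (m+1) with hj | hj
        · have hBj := ihB j hj1 (by omega)
          have p_j := rho_pos H hH j
          have p_j1 := rho_pos H hH (j+1)
          nlinarith [hBj, LC, p_m, p_m1, p_j, p_j1]
        · have hje : j = m + 1 := by omega
          subst hje
          exact le_of_eq (mul_comm _ _)

theorem stmt_4 (H : ℝ) (hH : H ∈ Ioo (1 / 2 : ℝ) 1) (n : ℕ) (hn : 2 ≤ n)
    (Γ : ℕ → ℝ)
    (hsys : ∀ l, 2 ≤ l → l ≤ n →
      rho H (l - 1) = ∑ k ∈ Finset.Icc 2 n, Γ k * rho H ((l : ℤ) - (k : ℤ)).natAbs)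
    (hpos : ∀ k, 2 ≤ k → k ≤ n → 0 < Γ k) :
    0 < rho H n - ∑ k ∈ Finset.Icc 2 n, Γ k * rho H (n + 1 - k) ∧
    (0 < 1 - ∑ k ∈ Finset.Icc 2 n, Γ k * rho H (k - 1) →
      0 < (rho H n - ∑ k ∈ Finset.Icc 2 n, Γ k * rho H (n + 1 - k))
          / (1 - ∑ k ∈ Finset.Icc 2 n, Γ k * rho H (k - 1))) := by
  have hρ := rho_pos H hH
  have hn1 : 1 ≤ n - 1 := by omega
  obtain ⟨hA, hB⟩ := chain H hH (n - 1) hn1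
  rw [show n - 1 + 1 = n by omega] at hA hB
  have hsysn' : rho H (n - 1) = ∑ k ∈ Finset.Icc 2 n, Γ k * rho H (n - k) := by
    rw [hsys n (by omega) le_rfl]
    apply Finset.sum_congr rfl
    intro k hk
    simp only [Finset.mem_Icc] at hk
    congr 2
    omega
  have key : (∑ k ∈ Finset.Icc 2 n, Γ k * rho H (n + 1 - k)) * rho H (n - 1)
      < rho H n * rho H (n - 1) := by
    rw [Finset.sum_mul]
    have hrhs : rho H n * rho H (n - 1)
        = ∑ k ∈ Finset.Icc 2 n, Γ k * rho H (n - k) * rho H n := by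
      rw [← Finset.sum_mul, ← hsysn']; ring
    rw [hrhs]
    have hstrict : ∀ k ∈ Finset.Icc 2 n, k = n →
        Γ k * rho H (n + 1 - k) * rho H (n - 1) < Γ k * rho H (n - k) * rho H n := by
      intro k _ hkn
      subst hkn
      rw [show k + 1 - k = 1 by omega, show k - k = 0 by omega,
        show rho H 0 = 1 by simp [rho]]
      have hΓ := hpos k hn le_rfl
      nlinarith [hA, hρ 1, hρ (k - 1), hΓ]
    apply Finset.sum_lt_sum
    · intro k hk
      simp only [Finset.mem_Icc] at hk
      by_cases hkn : k = n
      · exact (hstrict k (Finset.mem_Icc.2 hk) hkn).le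
      · have hj1 : 1 ≤ n - k := by omega
        have hj2 : n - k ≤ n - 1 := by omega
        have hBj := hB (n - k) hj1 hj2
        rw [show n - k + 1 = n + 1 - k by omega] at hBj
        have hΓ := hpos k hk.1 hk.2
        calc Γ k * rho H (n + 1 - k) * rho H (n - 1)
            = Γ k * (rho H (n + 1 - k) * rho H (n - 1)) := by ring
          _ ≤ Γ k * (rho H (n - k) * rho H n) := mul_le_mul_of_nonneg_left hBj hΓ.le
          _ = Γ k * rho H (n - k) * rho H n := by ring
    · exact ⟨n, Finset.mem_Icc.2 ⟨hn, le_rfl⟩, hstrict n (Finset.mem_Icc.2 ⟨hn, le_rfl⟩) rfl⟩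
  have first : 0 < rho H n - ∑ k ∈ Finset.Icc 2 n, Γ k * rho H (n + 1 - k) := by
    nlinarith [key, hρ (n - 1)]
  exact ⟨first, fun hden => div_pos first hden⟩
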